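/- Let (M, μ) be a probability measure space, {φ_k : k ∈ ℕ} an orthonormal basis of L²(M, μ) consisting of bounded measurable functions with φ_1 ≡ 1, λ_k ≥ 0 nondecreasing with λ_k → ∞, and let 𝒳 = {x_{n,k}} with weights τ = {τ_{n,k}} be a Marcinkiewicz–Zygmund family for this system with constants A, B > 0 and κ = B/A. Then for each n there exist complex weights w_{n,1},…,w_{n,L_n} such that the quadrature rule I_n(f) = ∑_{k=1}^{L_n} f(x_{n,k}) w_{n,k} satisfies I_n(p) = ∫_M p dμ for all p ∈ 𝒫_n and |I_n(f)| ≤ √κ ‖f‖_∞ for every bounded measurable f; consequently, for every bounded measurable f and every n, |∫_M f dμ − I_n(f)| ≤ (1 + √κ) inf_{p ∈ 𝒫_n} ‖f − p‖_∞. -/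

import Mathlib

open MeasureTheory

noncomputable section

variable {M : Type*} [MeasurableSpace M]

/-- The `k`-th coefficient `f̂(k) = ⟨f, φ_k⟩ = ∫_M f φ̄_k dμ`. -/
def coef (μ : Measure M) (φ : ℕ → M → ℂ) (f : M → ℂ) (k : ℕ) : ℂ :=
  ∫ x, f x * (starRingEnd ℂ) (φ k x) ∂μ

/-- `{φ_k}` is an orthonormal basis of `L²(M,μ)` of bounded measurable functions. -/
def IsBoundedONB (μ : Measure M) (φ : ℕ → M → ℂ) : Prop :=
  (∀ k, Measurable (φ k)) ∧
  (∀ k, ∃ C : ℝ, ∀ x, ‖φ k x‖ ≤ C) ∧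
  (∀ j k, ∫ x, φ j x * (starRingEnd ℂ) (φ k x) ∂μ = if j = k then 1 else 0) ∧
  (∀ f : M → ℂ, MemLp f 2 μ → (∀ k, coef μ φ f k = 0) → f =ᵐ[μ] 0)

/-- `p ∈ 𝒫_n = span{φ_k : λ_k ≤ n}` (pointwise representatives). -/
def IsDiffusionPoly (φ : ℕ → M → ℂ) (lam : ℕ → ℝ) (n : ℕ) (p : M → ℂ) : Prop :=
  ∃ (s : Finset ℕ) (c : ℕ → ℂ), (∀ k ∈ s, lam k ≤ (n : ℝ)) ∧
    p = fun x => ∑ k ∈ s, c k * φ k x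

/-- `‖p‖₂² = ∫_M |p|² dμ`. -/
def L2normSq (μ : Measure M) (p : M → ℂ) : ℝ := ∫ x, ‖p x‖ ^ 2 ∂μ

/-- bounded measurable is integrable on a finite measure -/
lemma integrable_of_bdd {μ : Measure M} [IsFiniteMeasure μ] {f : M → ℂ}
    (hm : Measurable f) {C : ℝ} (hC : ∀ y, ‖f y‖ ≤ C) : Integrable f μ :=
  (integrable_const C).mono' hm.aestronglyMeasurable (Filter.Eventually.of_forall hC)

/-- `‖∫ p‖ ≤ √(∫ ‖p‖²)` on a probability space -/
lemma norm_integral_le_sqrt_L2 {μ : Measure M} [IsProbabilityMeasure μ] {p : M → ℂ}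
    (hm : Measurable p) {C : ℝ} (hC : ∀ y, ‖p y‖ ≤ C) :
    ‖∫ y, p y ∂μ‖ ≤ Real.sqrt (L2normSq μ p) := by
  have h1 : ‖∫ y, p y ∂μ‖ ≤ ∫ y, ‖p y‖ ∂μ := norm_integral_le_integral_norm _
  have hconj : (2:ℝ).HolderConjugate 2 := ⟨by norm_num, by norm_num, by norm_num⟩
  have hmem : MemLp (fun y => ‖p y‖) (ENNReal.ofReal 2) μ :=
    MemLp.of_bound hm.norm.aestronglyMeasurable C
      (Filter.Eventually.of_forall fun y => by simpa using hC y)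
  have hmem1 : MemLp (fun _ : M => (1:ℝ)) (ENNReal.ofReal 2) μ := memLp_const 1
  have h2 := integral_mul_le_Lp_mul_Lq_of_nonneg hconj
    (Filter.Eventually.of_forall fun y => norm_nonneg (p y))
    (Filter.Eventually.of_forall fun _ => zero_le_one) hmem hmem1
  simp only [mul_one, Real.one_rpow] at h2
  have h3 : ∫ y, ‖p y‖ ∂μ ≤ (∫ y, ‖p y‖ ^ (2:ℝ) ∂μ) ^ ((1:ℝ)/2) * (∫ _y, (1:ℝ) ∂μ) ^ ((1:ℝ)/2) := by
    convert h2 using 3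
  rw [integral_const, probReal_univ] at h3
  simp only [ENNReal.toReal_one, smul_eq_mul, one_mul, Real.one_rpow, mul_one] at h3
  have h4 : (∫ y, ‖p y‖ ^ (2:ℝ) ∂μ) = L2normSq μ p := by
    unfold L2normSq
    refine integral_congr_ae (Filter.Eventually.of_forall fun y => ?_)
    show ‖p y‖ ^ (2:ℝ) = ‖p y‖ ^ (2:ℕ)
    rw [show ((2:ℝ)) = ((2:ℕ):ℝ) by norm_num, Real.rpow_natCast]
  rw [h4] at h3
  have h5 : (L2normSq μ p) ^ ((1:ℝ)/2) = Real.sqrt (L2normSq μ p) := by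
    rw [Real.sqrt_eq_rpow]
  linarith
/-- measurability and boundedness of diffusion polynomials -/
lemma diffusionPoly_bdd {φ : ℕ → M → ℂ} (hmeas : ∀ k, Measurable (φ k))
    (hbd : ∀ k, ∃ C : ℝ, ∀ y, ‖φ k y‖ ≤ C) {lam : ℕ → ℝ} {n : ℕ} {p : M → ℂ}
    (hp : IsDiffusionPoly φ lam n p) : Measurable p ∧ ∃ D : ℝ, ∀ y, ‖p y‖ ≤ D := by
  obtain ⟨s, c, hs, rfl⟩ := hp
  choose Cf hCf using hbd
  refine ⟨Finset.measurable_sum _ fun k _ => (hmeas k).const_mul (c k),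
    ∑ k ∈ s, ‖c k‖ * Cf k, fun y => ?_⟩
  calc ‖∑ k ∈ s, c k * φ k y‖ ≤ ∑ k ∈ s, ‖c k * φ k y‖ := norm_sum_le _ _
    _ ≤ ∑ k ∈ s, ‖c k‖ * Cf k := by
        refine Finset.sum_le_sum fun k _ => ?_
        rw [norm_mul]
        exact mul_le_mul_of_nonneg_left (hCf k y) (norm_nonneg _)

/-- Step A: existence of exact quadrature weights with small ℓ¹ norm. -/
lemma step_A (μ : Measure M) [IsProbabilityMeasure μ]
    (φ : ℕ → M → ℂ) (hmeas : ∀ k, Measurable (φ k)) (hbd : ∀ k, ∃ C : ℝ, ∀ y, ‖φ k y‖ ≤ C)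
    (hφ0 : φ 0 = fun _ => (1:ℂ))
    (lam : ℕ → ℝ) (hmono : Monotone lam)
    (hlim : Filter.Tendsto lam Filter.atTop Filter.atTop)
    (n Ln : ℕ) (xs : Fin Ln → M) (ts : Fin Ln → ℝ) (A B : ℝ) (hA : 0 < A) (hB : 0 < B)
    (hτ : ∀ k, 0 < ts k)
    (hMZ : ∀ p : M → ℂ, IsDiffusionPoly φ lam n p →
      A * L2normSq μ p ≤ ∑ k, ‖p (xs k)‖ ^ 2 * ts k ∧
      ∑ k, ‖p (xs k)‖ ^ 2 * ts k ≤ B * L2normSq μ p) :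
    ∃ w : Fin Ln → ℂ,
      (∀ p : M → ℂ, IsDiffusionPoly φ lam n p →
        ∑ k, p (xs k) * w k = ∫ t, p t ∂μ) ∧
      ∑ k, ‖w k‖ ≤ Real.sqrt (B / A) := by
  by_cases hc : lam 0 ≤ (n:ℝ)
  case neg =>
    refine ⟨0, fun p hp => ?_, by simp [Real.sqrt_nonneg]⟩
    obtain ⟨s, c, hs, rfl⟩ := hp
    have hse : s = ∅ := by
      by_contra h
      obtain ⟨k, hk⟩ := Finset.nonempty_iff_ne_empty.2 h
      exact hc (le_trans (hmono (Nat.zero_le k)) (hs k hk))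
    subst hse; simp
  case pos =>
  -- the index set K = {k | lam k ≤ n} is finite
  obtain ⟨N, hN⟩ : ∃ N, ∀ k ≥ N, (n:ℝ) < lam k :=
    Filter.eventually_atTop.1 (hlim.eventually_gt_atTop (n:ℝ))
  set K : Finset ℕ := (Finset.range N).filter (fun k => lam k ≤ (n:ℝ)) with hKdef
  have hK : ∀ k, k ∈ K ↔ lam k ≤ (n:ℝ) := by
    intro k
    simp only [hKdef, Finset.mem_filter, Finset.mem_range]
    refine ⟨fun h => h.2, fun h => ⟨?_, h⟩⟩
    by_contra hk
    exact absurd h (not_le.2 (hN k (le_of_not_gt hk)))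
  -- integrability of the basis functions
  have hint : ∀ k, Integrable (φ k) μ := fun k => by
    obtain ⟨C, hC⟩ := hbd k; exact integrable_of_bdd (hmeas k) hC
  -- the sampling map T and integral functional J on coefficient space
  set E := EuclideanSpace ℂ (Fin Ln) with hEdef
  let T : ((↥K) → ℂ) →ₗ[ℂ] E :=
    { toFun := fun c => (WithLp.toLp 2 (fun j => (∑ i : ↥K, c i * φ i (xs j)) * ((Real.sqrt (ts j) : ℝ) : ℂ)) : E)
      map_add' := by
        intro a b; ext j
        show (∑ i : ↥K, (a i + b i) * φ i (xs j)) * _ = _ * _ + _ * _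
        rw [← add_mul, ← Finset.sum_add_distrib]
        congr 1
        exact Finset.sum_congr rfl fun i _ => by ring
      map_smul' := by
        intro r a; ext j
        show (∑ i : ↥K, (r * a i) * φ i (xs j)) * _ = r * ((∑ i : ↥K, a i * φ i (xs j)) * _)
        rw [show (∑ i : ↥K, (r * a i) * φ i (xs j)) = r * ∑ i : ↥K, a i * φ i (xs j) by
          rw [Finset.mul_sum]; exact Finset.sum_congr rfl fun i _ => mul_assoc _ _ _]
        rw [mul_assoc] }
  let J : ((↥K) → ℂ) →ₗ[ℂ] ℂ :=
    { toFun := fun c => ∑ i : ↥K, c i * (∫ y, φ i y ∂μ)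
      map_add' := by
        intro a b
        show ∑ i : ↥K, (a i + b i) * _ = _
        rw [← Finset.sum_add_distrib]
        exact Finset.sum_congr rfl fun i _ => by ring
      map_smul' := by
        intro r a
        show ∑ i : ↥K, (r * a i) * (∫ y, φ i y ∂μ) = r * ∑ i : ↥K, a i * (∫ y, φ i y ∂μ)
        rw [Finset.mul_sum]
        exact Finset.sum_congr rfl fun i _ => mul_assoc _ _ _ }
  -- the integral of the polynomial with coefficients c equals J c
  have hJint : ∀ c : (↥K) → ℂ, ∫ y, (∑ i : ↥K, c i * φ i y) ∂μ = J c := by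
    intro c
    rw [integral_finset_sum _ (fun (i : ↥K) _ => (hint (i:ℕ)).const_mul (c i))]
    exact Finset.sum_congr rfl fun i _ => integral_const_mul _ _
  -- polynomials from coefficients are diffusion polys
  have hdp : ∀ c : (↥K) → ℂ, IsDiffusionPoly φ lam n (fun y => ∑ i : ↥K, c i * φ i y) := by
    intro c
    refine ⟨K, fun k => if h : k ∈ K then c ⟨k, h⟩ else 0, fun k hk => (hK k).1 hk, ?_⟩
    funext y
    rw [← Finset.sum_coe_sort K (fun k => (if h : k ∈ K then c ⟨k, h⟩ else 0) * φ k y)]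
    exact Finset.sum_congr rfl fun i _ => by rw [dif_pos i.2]
  have hpm : ∀ c : (↥K) → ℂ, Measurable (fun y => ∑ i : ↥K, c i * φ i y) ∧
      ∃ D : ℝ, ∀ y, ‖∑ i : ↥K, c i * φ i y‖ ≤ D := fun c => diffusionPoly_bdd hmeas hbd (hdp c)
  -- ‖T c‖² is the MZ sampling sum
  have hTnorm : ∀ c : (↥K) → ℂ,
      ‖T c‖ = Real.sqrt (∑ j, ‖∑ i : ↥K, c i * φ i (xs j)‖ ^ 2 * ts j) := by
    intro c
    rw [EuclideanSpace.norm_eq]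
    congr 1
    refine Finset.sum_congr rfl fun j _ => ?_
    show ‖(∑ i : ↥K, c i * φ i (xs j)) * ((Real.sqrt (ts j) : ℝ) : ℂ)‖ ^ 2 = _
    rw [norm_mul, Complex.norm_real, Real.norm_eq_abs,
      abs_of_nonneg (Real.sqrt_nonneg _), mul_pow, Real.sq_sqrt (hτ j).le]
  -- kernel inclusion : ker T ≤ ker J
  have hker : LinearMap.ker T ≤ LinearMap.ker J := by
    intro c hc0
    rw [LinearMap.mem_ker] at hc0 ⊢
    have hsamp : ∀ j, (∑ i : ↥K, c i * φ i (xs j)) = 0 := by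
      intro j
      have h0 : (∑ i : ↥K, c i * φ i (xs j)) * ((Real.sqrt (ts j) : ℝ) : ℂ) = 0 := by
        have h1 := congrFun (congrArg (fun (v : E) => (v : Fin Ln → ℂ)) hc0) j
        simp only [Pi.zero_apply, PiLp.zero_apply] at h1; exact h1
      rcases mul_eq_zero.1 h0 with h | h
      · exact h
      · rw [Complex.ofReal_eq_zero] at h
        exact absurd h (Real.sqrt_ne_zero'.2 (hτ j))
    have hMZp := (hMZ _ (hdp c)).1
    have hsum0 : (∑ j, ‖∑ i : ↥K, c i * φ i (xs j)‖ ^ 2 * ts j) = 0 :=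
      Finset.sum_eq_zero fun j _ => by rw [hsamp j]; simp
    rw [hsum0] at hMZp
    have hL2nn : 0 ≤ L2normSq μ (fun y => ∑ i : ↥K, c i * φ i y) :=
      integral_nonneg fun y => by positivity
    have hL2 : L2normSq μ (fun y => ∑ i : ↥K, c i * φ i y) = 0 := by nlinarith
    obtain ⟨hm, D, hD⟩ := hpm c
    have hint2 : Integrable (fun y => ‖∑ i : ↥K, c i * φ i y‖ ^ 2) μ := by
      refine (integrable_const (D^2)).mono' ((hm.norm.pow_const 2).aestronglyMeasurable)
        (Filter.Eventually.of_forall fun y => ?_)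
      rw [Real.norm_eq_abs, abs_of_nonneg (by positivity)]
      exact pow_le_pow_left₀ (norm_nonneg _) (hD y) 2
    have hae : (fun y => ‖∑ i : ↥K, c i * φ i y‖ ^ 2) =ᵐ[μ] 0 :=
      (integral_eq_zero_iff_of_nonneg_ae
        (Filter.Eventually.of_forall fun y => by positivity) hint2).1 hL2
    have hp0 : (fun y => ∑ i : ↥K, c i * φ i y) =ᵐ[μ] 0 := by
      filter_upwards [hae] with y hy
      have h2 : ‖∑ i : ↥K, c i * φ i y‖ ^ 2 = 0 := hy
      have h3 : ‖∑ i : ↥K, c i * φ i y‖ = 0 := by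
        nlinarith [norm_nonneg (∑ i : ↥K, c i * φ i y)]
      simpa using norm_eq_zero.1 h3
    rw [← hJint c, integral_congr_ae hp0]; simp
  -- Riesz representation of the lifted functional
  set V : Submodule ℂ E := LinearMap.range T with hVdef
  haveI : CompleteSpace ↥V := FiniteDimensional.complete ℂ ↥V
  let e := LinearMap.quotKerEquivRange T
  let ℓ₀ : ↥V →ₗ[ℂ] ℂ := ((LinearMap.ker T).liftQ J hker).comp e.symm.toLinearMap
  have hkey : ∀ (c : (↥K) → ℂ) (h : T c ∈ V), ℓ₀ ⟨T c, h⟩ = J c := by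
    intro c h
    have h1 : e.symm ⟨T c, h⟩ = Submodule.Quotient.mk c := by
      rw [LinearEquiv.symm_apply_eq]
      exact Subtype.ext (LinearMap.quotKerEquivRange_apply_mk T c).symm
    show ((LinearMap.ker T).liftQ J hker) (e.symm ⟨T c, h⟩) = J c
    rw [h1, Submodule.liftQ_apply]
  let ℓ : ↥V →L[ℂ] ℂ := LinearMap.toContinuousLinearMap ℓ₀
  let lhat : E →L[ℂ] ℂ := ℓ.comp (V.orthogonalProjectionOnto)
  have hl0 : ∀ v : ↥V, ‖ℓ₀ v‖ ≤ (Real.sqrt A)⁻¹ * ‖v‖ := by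
    rintro ⟨v, hv⟩
    obtain ⟨c, rfl⟩ := LinearMap.mem_range.1 hv
    show ‖ℓ₀ ⟨T c, hv⟩‖ ≤ (Real.sqrt A)⁻¹ * ‖T c‖
    rw [hkey c hv]
    obtain ⟨hm, D, hD⟩ := hpm c
    have h1 : ‖(J c : ℂ)‖ ≤ Real.sqrt (L2normSq μ (fun y => ∑ i : ↥K, c i * φ i y)) := by
      rw [← hJint c]; exact norm_integral_le_sqrt_L2 hm hD
    have h2 := (hMZ _ (hdp c)).1
    have hTc : (∑ j, ‖∑ i : ↥K, c i * φ i (xs j)‖ ^ 2 * ts j) = ‖T c‖^2 := by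
      rw [hTnorm c, Real.sq_sqrt]
      exact Finset.sum_nonneg fun j _ => mul_nonneg (by positivity) (hτ j).le
    have h3 : L2normSq μ (fun y => ∑ i : ↥K, c i * φ i y) ≤ ‖T c‖^2 / A := by
      rw [← hTc, le_div_iff₀ hA, mul_comm]
      exact h2
    calc ‖(J c : ℂ)‖ ≤ Real.sqrt (L2normSq μ (fun y => ∑ i : ↥K, c i * φ i y)) := h1
      _ ≤ Real.sqrt (‖T c‖^2 / A) := Real.sqrt_le_sqrt h3
      _ = ‖T c‖ / Real.sqrt A := by
          rw [Real.sqrt_div (sq_nonneg _), Real.sqrt_sq (norm_nonneg _)]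
      _ = (Real.sqrt A)⁻¹ * ‖T c‖ := by rw [div_eq_inv_mul]
  have hlhat : ‖lhat‖ ≤ (Real.sqrt A)⁻¹ := by
    refine ContinuousLinearMap.opNorm_le_bound _ (inv_nonneg.2 (Real.sqrt_nonneg _)) fun u => ?_
    have h1 : ‖lhat u‖ = ‖ℓ₀ (V.orthogonalProjectionOnto u)‖ := rfl
    rw [h1]
    refine le_trans (hl0 _) (mul_le_mul_of_nonneg_left ?_ (inv_nonneg.2 (Real.sqrt_nonneg _)))
    calc ‖(V.orthogonalProjectionOnto u : ↥V)‖
        ≤ ‖V.orthogonalProjectionOnto‖ * ‖u‖ := (V.orthogonalProjectionOnto).le_opNorm u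
      _ ≤ 1 * ‖u‖ := mul_le_mul_of_nonneg_right (Submodule.orthogonalProjectionOnto_norm_le V) (norm_nonneg u)
      _ = ‖u‖ := one_mul _
  set g : E := (InnerProductSpace.toDual ℂ E).symm lhat with hgdef
  have hgnorm : ‖g‖ ≤ (Real.sqrt A)⁻¹ := by
    rw [hgdef, LinearIsometryEquiv.norm_map]; exact hlhat
  have hg : ∀ u : E, (∑ j, (starRingEnd ℂ) (g j) * u j) = lhat u := by
    intro u
    rw [← InnerProductSpace.toDual_symm_apply (𝕜 := ℂ) (E := E) (x := u) (y := lhat)]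
    rw [← hgdef, PiLp.inner_apply]
    exact Finset.sum_congr rfl fun j _ => by simp [RCLike.inner_apply, mul_comm]
  refine ⟨fun j => (starRingEnd ℂ) (g j) * ((Real.sqrt (ts j) : ℝ) : ℂ), ?_, ?_⟩
  · -- exactness on 𝒫_n
    intro p hp
    obtain ⟨s, cc, hs, rfl⟩ := hp
    have hsub : s ⊆ K := fun k hk => (hK k).2 (hs k hk)
    set c : (↥K) → ℂ := fun i => if (i:ℕ) ∈ s then cc i else 0 with hcdef
    have hps : ∀ y, ∑ k ∈ s, cc k * φ k y = ∑ i : ↥K, c i * φ i y := by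
      intro y
      calc ∑ k ∈ s, cc k * φ k y
          = ∑ k ∈ s, (if k ∈ s then cc k else 0) * φ k y :=
            Finset.sum_congr rfl fun k hk => by rw [if_pos hk]
        _ = ∑ k ∈ K, (if k ∈ s then cc k else 0) * φ k y :=
            Finset.sum_subset hsub (fun k _ hks => by rw [if_neg hks, zero_mul])
        _ = ∑ i : ↥K, c i * φ i y :=
            (Finset.sum_coe_sort K (fun k => (if k ∈ s then cc k else 0) * φ k y)).symm
    have hmem : T c ∈ V := LinearMap.mem_range_self T c
    have hTsamp : ∀ j, T c j = (∑ k ∈ s, cc k * φ k (xs j)) * ((Real.sqrt (ts j) : ℝ) : ℂ) := by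
      intro j
      show (∑ i : ↥K, c i * φ i (xs j)) * _ = _
      rw [← hps]
    calc ∑ j, (∑ k ∈ s, cc k * φ k (xs j)) * ((starRingEnd ℂ) (g j) * ((Real.sqrt (ts j) : ℝ) : ℂ))
        = ∑ j, (starRingEnd ℂ) (g j) * T c j := by
          refine Finset.sum_congr rfl fun j _ => ?_
          rw [hTsamp j]; ring
      _ = lhat (T c) := hg (T c)
      _ = ℓ₀ (V.orthogonalProjectionOnto (T c)) := rfl
      _ = ℓ₀ ⟨T c, hmem⟩ := by
          congr 1
          exact Submodule.orthogonalProjectionOnto_mem_subspace_eq_self (⟨T c, hmem⟩ : ↥V)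
      _ = J c := hkey c hmem
      _ = ∫ y, (∑ i : ↥K, c i * φ i y) ∂μ := (hJint c).symm
      _ = ∫ y, (∑ k ∈ s, cc k * φ k y) ∂μ := by
          refine integral_congr_ae (Filter.Eventually.of_forall fun y => ?_)
          exact (hps y).symm
  · -- ℓ¹ bound on the weights
    have hwj : ∀ j : Fin Ln, ‖(starRingEnd ℂ) (g j) * ((Real.sqrt (ts j) : ℝ) : ℂ)‖
        = ‖g j‖ * Real.sqrt (ts j) := by
      intro j
      rw [norm_mul, RCLike.norm_conj, Complex.norm_real, Real.norm_eq_abs,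
        abs_of_nonneg (Real.sqrt_nonneg _)]
    have hsumts : ∑ j, ts j ≤ B := by
      have hone : IsDiffusionPoly φ lam n (fun _ : M => (1:ℂ)) := by
        refine ⟨{0}, fun _ => 1, by simpa using hc, ?_⟩
        funext y
        rw [Finset.sum_singleton, one_mul, hφ0]
      have h1 := (hMZ _ hone).2
      have h2 : L2normSq μ (fun _ : M => (1:ℂ)) = 1 := by
        simp [L2normSq]
      rw [h2, mul_one] at h1
      simpa using h1
    have hnn : 0 ≤ ∑ j, ‖g j‖ * Real.sqrt (ts j) :=
      Finset.sum_nonneg fun j _ => mul_nonneg (norm_nonneg _) (Real.sqrt_nonneg _)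
    have hCS : ∑ j, ‖g j‖ * Real.sqrt (ts j) ≤ ‖g‖ * Real.sqrt (∑ j, ts j) := by
      have h1 := Finset.sum_mul_sq_le_sq_mul_sq Finset.univ
        (fun j => ‖g j‖) (fun j => Real.sqrt (ts j))
      have h2 : ∑ j, (Real.sqrt (ts j))^2 = ∑ j, ts j :=
        Finset.sum_congr rfl fun j _ => Real.sq_sqrt (hτ j).le
      rw [h2] at h1
      rw [← Real.sqrt_sq hnn]
      refine le_trans (Real.sqrt_le_sqrt h1) ?_
      rw [Real.sqrt_mul (Finset.sum_nonneg fun j _ => sq_nonneg _)]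
      have h3 : Real.sqrt (∑ j, ‖g j‖^2) = ‖g‖ := by
        rw [EuclideanSpace.norm_eq]
      rw [h3]
    calc ∑ j, ‖(starRingEnd ℂ) (g j) * ((Real.sqrt (ts j) : ℝ) : ℂ)‖
        = ∑ j, ‖g j‖ * Real.sqrt (ts j) := Finset.sum_congr rfl fun j _ => hwj j
      _ ≤ ‖g‖ * Real.sqrt (∑ j, ts j) := hCS
      _ ≤ (Real.sqrt A)⁻¹ * Real.sqrt B := by
          refine mul_le_mul hgnorm (Real.sqrt_le_sqrt hsumts) (Real.sqrt_nonneg _)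
            (inv_nonneg.2 (Real.sqrt_nonneg _))
      _ = Real.sqrt (B / A) := by
          rw [Real.sqrt_div hB.le, div_eq_inv_mul]

/-- for an MZ family (with `φ_1 ≡ 1`) there exist quadrature weights
`w_{n,k}` such that `I_n(f) = ∑_k f(x_{n,k}) w_{n,k}` is exact on `𝒫_n` and
`|I_n(f)| ≤ √κ ‖f‖_∞` for bounded measurable `f`; consequently
`|∫ f dμ − I_n(f)| ≤ (1+√κ) inf_{p ∈ 𝒫_n} ‖f − p‖_∞` (expressed by quantifying
over all `p ∈ 𝒫_n`). -/
theorem quadrature_rules_general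
    (μ : Measure M) [IsProbabilityMeasure μ]
    (φ : ℕ → M → ℂ) (hONB : IsBoundedONB μ φ) (hφ0 : φ 0 = fun _ => (1 : ℂ))
    (lam : ℕ → ℝ) (hlam0 : ∀ k, 0 ≤ lam k) (hmono : Monotone lam)
    (hlim : Filter.Tendsto lam Filter.atTop Filter.atTop)
    (L : ℕ → ℕ) (x : ∀ n, Fin (L n) → M) (τ : ∀ n, Fin (L n) → ℝ)
    (A B : ℝ) (hA : 0 < A) (hB : 0 < B) (hτ : ∀ n k, 0 < τ n k)
    (hMZ : ∀ n (p : M → ℂ), IsDiffusionPoly φ lam n p →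
      A * L2normSq μ p ≤ ∑ k, ‖p (x n k)‖ ^ 2 * τ n k ∧
      ∑ k, ‖p (x n k)‖ ^ 2 * τ n k ≤ B * L2normSq μ p) :
    ∀ n : ℕ, ∃ w : Fin (L n) → ℂ,
      (∀ p : M → ℂ, IsDiffusionPoly φ lam n p →
        ∑ k, p (x n k) * w k = ∫ t, p t ∂μ) ∧
      (∀ f : M → ℂ, Measurable f → (∃ C : ℝ, ∀ t, ‖f t‖ ≤ C) →
        ‖∑ k, f (x n k) * w k‖ ≤ Real.sqrt (B / A) * ⨆ t, ‖f t‖) ∧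
      (∀ f : M → ℂ, Measurable f → (∃ C : ℝ, ∀ t, ‖f t‖ ≤ C) →
        ∀ p : M → ℂ, IsDiffusionPoly φ lam n p →
          ‖(∫ t, f t ∂μ) - ∑ k, f (x n k) * w k‖ ≤
            (1 + Real.sqrt (B / A)) * ⨆ t, ‖f t - p t‖) := by
  obtain ⟨hmeas, hbd, _, _⟩ := hONB
  intro n
  obtain ⟨w, hw1, hw2⟩ := step_A μ φ hmeas hbd hφ0 lam hmono hlim n (L n) (x n) (τ n)
    A B hA hB (hτ n) (hMZ n)
  -- the sup-norm bound for arbitrary bounded functions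
  have claim2 : ∀ f : M → ℂ, (∃ C : ℝ, ∀ t, ‖f t‖ ≤ C) →
      ‖∑ k, f (x n k) * w k‖ ≤ Real.sqrt (B / A) * ⨆ t, ‖f t‖ := by
    rintro f ⟨C, hC⟩
    have hbdd : BddAbove (Set.range fun t => ‖f t‖) := ⟨C, by rintro _ ⟨t, rfl⟩; exact hC t⟩
    have hS0 : (0:ℝ) ≤ ⨆ t, ‖f t‖ := Real.iSup_nonneg fun t => norm_nonneg _
    calc ‖∑ k, f (x n k) * w k‖ ≤ ∑ k, ‖f (x n k) * w k‖ := norm_sum_le _ _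
      _ ≤ ∑ k, (⨆ t, ‖f t‖) * ‖w k‖ := by
          refine Finset.sum_le_sum fun k _ => ?_
          rw [norm_mul]
          exact mul_le_mul_of_nonneg_right (le_ciSup hbdd (x n k)) (norm_nonneg _)
      _ = (⨆ t, ‖f t‖) * ∑ k, ‖w k‖ := (Finset.mul_sum _ _ _).symm
      _ ≤ (⨆ t, ‖f t‖) * Real.sqrt (B / A) := mul_le_mul_of_nonneg_left hw2 hS0
      _ = Real.sqrt (B / A) * ⨆ t, ‖f t‖ := mul_comm _ _
  refine ⟨w, hw1, fun f _ hCf => claim2 f hCf, ?_⟩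
  rintro f hfm ⟨C, hC⟩ p hp
  obtain ⟨hpm, D, hD⟩ := diffusionPoly_bdd hmeas hbd hp
  -- integrability
  have hfint : Integrable f μ := integrable_of_bdd hfm hC
  have hpint : Integrable p μ := integrable_of_bdd hpm hD
  -- the difference g = f - p
  have hgbd : ∀ t, ‖f t - p t‖ ≤ C + D := fun t =>
    le_trans (norm_sub_le _ _) (add_le_add (hC t) (hD t))
  have hbdd : BddAbove (Set.range fun t => ‖f t - p t‖) :=
    ⟨C + D, by rintro _ ⟨t, rfl⟩; exact hgbd t⟩
  have hS0 : (0:ℝ) ≤ ⨆ t, ‖f t - p t‖ := Real.iSup_nonneg fun t => norm_nonneg _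
  have h2 : ‖∑ k, (f (x n k) - p (x n k)) * w k‖ ≤ Real.sqrt (B / A) * ⨆ t, ‖f t - p t‖ :=
    claim2 (fun t => f t - p t) ⟨C + D, hgbd⟩
  have h3 : ‖∫ t, (f t - p t) ∂μ‖ ≤ ⨆ t, ‖f t - p t‖ := by
    have := norm_integral_le_of_norm_le_const (μ := μ) (f := fun t => f t - p t)
      (C := ⨆ t, ‖f t - p t‖) (Filter.Eventually.of_forall fun t => le_ciSup hbdd t)
    simpa [measure_univ] using this
  have hsplit : (∫ t, f t ∂μ) - ∑ k, f (x n k) * w k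
      = (∫ t, (f t - p t) ∂μ) - ∑ k, (f (x n k) - p (x n k)) * w k := by
    rw [integral_sub hfint hpint]
    have h4 : ∑ k, (f (x n k) - p (x n k)) * w k
        = ∑ k, f (x n k) * w k - ∑ k, p (x n k) * w k := by
      rw [← Finset.sum_sub_distrib]
      exact Finset.sum_congr rfl fun k _ => by ring
    rw [h4, hw1 p hp]
    ring
  rw [hsplit]
  calc ‖(∫ t, (f t - p t) ∂μ) - ∑ k, (f (x n k) - p (x n k)) * w k‖
      ≤ ‖∫ t, (f t - p t) ∂μ‖ + ‖∑ k, (f (x n k) - p (x n k)) * w k‖ := norm_sub_le _ _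
    _ ≤ (⨆ t, ‖f t - p t‖) + Real.sqrt (B / A) * ⨆ t, ‖f t - p t‖ := add_le_add h3 h2
    _ = (1 + Real.sqrt (B / A)) * ⨆ t, ‖f t - p t‖ := by ring

end
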